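/- Let (a_n) be a sequence of non-negative real numbers and (W_n) an increasing sequence of positive reals satisfying lim_{γ→1⁺} limsup_{n→∞} W_{⌊γn⌋}/W_n = 1. Set A_N = (1/W_N) ∑_{n=1}^N a_n. If there exists L ∈ [0,∞] and a sequence γ_k ∈ (1,∞) with γ_k → 1 such that for every k, lim_{N→∞} A_{⌊γ_k^N⌋} = L, then lim_{N→∞} A_N = L. -/

import Mathlib

open Filter MeasureTheory

set_option maxHeartbeats 2000000

/-- Lacunary subsequence trick: if the weighted averages `A_N = W_N⁻¹ ∑_{n=1}^N a_n`
of non-negative terms converge to `L ∈ [0,∞]` along all subsequences `⌊γ_k^N⌋` with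
`γ_k → 1`, then they converge to `L`. -/
theorem lacunary_subsequence_trick
    (a W : ℕ → ℝ) (ha : ∀ n, 0 ≤ a n) (hWpos : ∀ n, 0 < W n) (hWmono : StrictMono W)
    (hreg : Tendsto (fun γ : ℝ => Filter.limsup (fun n : ℕ => W ⌊γ * (n : ℝ)⌋₊ / W n) atTop)
      (nhdsWithin 1 (Set.Ioi 1)) (nhds 1))
    (A : ℕ → ℝ) (hA : ∀ N, A N = (W N)⁻¹ * ∑ n ∈ Finset.Icc 1 N, a n)
    (L : EReal) (hL : 0 ≤ L)
    (γ : ℕ → ℝ) (hγ : ∀ k, 1 < γ k) (hγ1 : Tendsto γ atTop (nhds 1))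
    (hsub : ∀ k, Tendsto (fun N : ℕ => ((A ⌊(γ k) ^ N⌋₊ : ℝ) : EReal)) atTop (nhds L)) :
    Tendsto (fun N : ℕ => ((A N : ℝ) : EReal)) atTop (nhds L) := by
  classical
  set s : ℕ → ℝ := fun N => ∑ n ∈ Finset.Icc 1 N, a n with hsdef
  have hsmono : Monotone s := by
    intro N P h
    exact Finset.sum_le_sum_of_subset_of_nonneg (Finset.Icc_subset_Icc le_rfl h)
      (fun i _ _ => ha i)
  have hsnonneg : ∀ N, 0 ≤ s N := fun N => Finset.sum_nonneg fun i _ => ha i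
  have hWmono' : Monotone W := hWmono.monotone
  have hAnn : ∀ N, 0 ≤ A N := by
    intro N; rw [hA]
    exact mul_nonneg (inv_nonneg.mpr (hWpos N).le) (hsnonneg N)
  have hAs : ∀ N, A N = s N / W N := by
    intro N; rw [hA, inv_mul_eq_div]
  -- sandwich inequalities
  have sandwich : ∀ P Q N : ℕ, Q ≤ N → N ≤ P →
      A N ≤ A P * (W P / W Q) ∧ A Q * (W Q / W P) ≤ A N := by
    intro P Q N hQN hNP
    have hWQ := hWpos Q
    have hWN := hWpos N
    have hWP := hWpos P
    constructor
    · rw [hAs N, hAs P]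
      have h1 : s N / W N ≤ s P / W Q :=
        div_le_div₀ (hsnonneg P) (hsmono hNP) hWQ (hWmono' hQN)
      have h2 : s P / W P * (W P / W Q) = s P / W Q := by
        field_simp
      rw [h2]; exact h1
    · rw [hAs N, hAs Q]
      have h1 : s Q / W P ≤ s N / W N :=
        div_le_div₀ (hsnonneg N) (hsmono hQN) hWN (hWmono' hNP)
      have h2 : s Q / W Q * (W Q / W P) = s Q / W P := by
        field_simp
      rw [h2]; exact h1
  -- bracketing: every large N lies between consecutive ⌊g^M⌋
  have bracket : ∀ g : ℝ, 1 < g → ∀ M₀ : ℕ, ∀ᶠ N in atTop,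
      ∃ M, M₀ ≤ M ∧ ⌊g ^ M⌋₊ ≤ N ∧ N ≤ ⌊g ^ (M + 1)⌋₊ := by
    intro g hg M₀
    have hfl : Tendsto (fun M : ℕ => ⌊g ^ M⌋₊) atTop atTop :=
      tendsto_nat_floor_atTop.comp (tendsto_pow_atTop_atTop_of_one_lt hg)
    filter_upwards [eventually_ge_atTop (⌊g ^ M₀⌋₊)] with N hN
    have hex : ∃ M, N < ⌊g ^ M⌋₊ := (hfl.eventually_gt_atTop N).exists
    set M₁ := Nat.find hex with hM₁def
    have h₁ : N < ⌊g ^ M₁⌋₊ := Nat.find_spec hex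
    have hM₀lt : M₀ < M₁ := by
      by_contra h
      push_neg at h
      have : ⌊g ^ M₁⌋₊ ≤ ⌊g ^ M₀⌋₊ :=
        Nat.floor_mono (pow_le_pow_right₀ (le_of_lt hg) h)
      omega
    refine ⟨M₁ - 1, by omega, ?_, ?_⟩
    · have := Nat.find_min hex (show M₁ - 1 < M₁ by omega)
      omega
    · have hfix : M₁ - 1 + 1 = M₁ := by omega
      rw [hfix]; exact h₁.le
  -- ratio lemma
  have ratio : ∀ ε : ℝ, 0 < ε → ∃ k, ∀ᶠ M in atTop,
      W ⌊(γ k) ^ (M + 1)⌋₊ / W ⌊(γ k) ^ M⌋₊ < 1 + ε := by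
    intro ε hε
    have h1 := hreg (Ioo_mem_nhds (show (1:ℝ)/2 < 1 by norm_num) (show (1:ℝ) < 1 + ε by linarith))
    rw [mem_map, mem_nhdsGT_iff_exists_Ioo_subset] at h1
    obtain ⟨u, hu, hsubs⟩ := h1
    have hγ2 : Tendsto (fun k => γ k * γ k) atTop (nhds 1) := by
      have := hγ1.mul hγ1
      simpa using this
    obtain ⟨k, hk⟩ := (hγ2.eventually_lt_const hu).exists
    refine ⟨k, ?_⟩
    set g := γ k with hgdef
    have hg : 1 < g := hγ k
    have hG : 1 < g * g := by nlinarith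
    have hmem := hsubs (Set.mem_Ioo.mpr ⟨hG, hk⟩)
    simp only [Set.mem_preimage, Set.mem_Ioo] at hmem
    set f : ℕ → ℝ := fun n => W ⌊(g * g) * (n : ℝ)⌋₊ / W n with hfdef
    have hbdd : IsBoundedUnder (· ≤ ·) atTop f := by
      by_contra hnb
      have hset : {x : ℝ | ∀ᶠ n in atTop, f n ≤ x} = ∅ := by
        ext x
        simp only [Set.mem_setOf_eq, Set.mem_empty_iff_false, iff_false]
        intro hx
        exact hnb ⟨x, hx⟩
      have hz : limsup f atTop = 0 := by
        rw [limsup_eq, hset, Real.sInf_empty]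
      rw [hz] at hmem
      norm_num at hmem
    have hev : ∀ᶠ n in atTop, f n < 1 + ε := eventually_lt_of_limsup_lt hmem.2 hbdd
    have hflM : Tendsto (fun M : ℕ => ⌊g ^ M⌋₊) atTop atTop :=
      tendsto_nat_floor_atTop.comp (tendsto_pow_atTop_atTop_of_one_lt hg)
    have hev2 : ∀ᶠ M in atTop, f ⌊g ^ M⌋₊ < 1 + ε := hflM.eventually hev
    have hpow : ∀ᶠ M : ℕ in atTop, g / (g - 1) ≤ g ^ M :=
      (tendsto_pow_atTop_atTop_of_one_lt hg).eventually_ge_atTop _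
    filter_upwards [hev2, hpow] with M h2 h3
    have hg1 : (0:ℝ) < g - 1 := by linarith
    have h5 : g ≤ (g - 1) * g ^ M := by
      rw [div_le_iff₀ hg1] at h3
      linarith [h3]
    have h4 : g ^ M - 1 < ((⌊g ^ M⌋₊ : ℕ) : ℝ) := Nat.sub_one_lt_floor _
    have hfloor : ⌊g ^ (M + 1)⌋₊ ≤ ⌊(g * g) * ((⌊g ^ M⌋₊ : ℕ) : ℝ)⌋₊ := by
      apply Nat.floor_mono
      have hstep : g ^ (M + 1) ≤ g * g * (g ^ M - 1) := by
        rw [pow_succ]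
        nlinarith
      nlinarith
    calc W ⌊g ^ (M + 1)⌋₊ / W ⌊g ^ M⌋₊
        ≤ f ⌊g ^ M⌋₊ := (div_le_div_iff_of_pos_right (hWpos _)).mpr (hWmono' hfloor)
      _ < 1 + ε := h2
  -- main case analysis on L
  induction L using EReal.rec with
  | bot => exact absurd hL (by simp)
  | coe l =>
    have hl : (0:ℝ) ≤ l := by exact_mod_cast hL
    rw [EReal.tendsto_coe]
    have hsub' : ∀ k, Tendsto (fun N : ℕ => A ⌊(γ k) ^ N⌋₊) atTop (nhds l) :=
      fun k => EReal.tendsto_coe.mp (hsub k)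
    rw [Metric.tendsto_atTop]
    intro ε hε
    have key : ∀ᶠ N in atTop, dist (A N) l < ε := by
      set ε' := min 1 (ε / (2 * (l + 2))) with hε'def
      have hl2 : (0:ℝ) < l + 2 := by linarith
      have hε'pos : 0 < ε' := lt_min one_pos (by positivity)
      have hε'le1 : ε' ≤ 1 := min_le_left _ _
      have hε'le : ε' * (l + 2) ≤ ε / 2 := by
        have h := min_le_right 1 (ε / (2 * (l + 2)))
        calc ε' * (l + 2) ≤ ε / (2 * (l + 2)) * (l + 2) := by
              exact mul_le_mul_of_nonneg_right h hl2.le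
          _ = ε / 2 := by field_simp
      have hε'ltε : ε' < ε := by nlinarith
      obtain ⟨k, hk⟩ := ratio ε' hε'pos
      set g := γ k with hgdef
      have hg : 1 < g := hγ k
      have hAclose : ∀ᶠ M : ℕ in atTop, |A ⌊g ^ M⌋₊ - l| < ε' := by
        have h := hsub' k
        rw [Metric.tendsto_atTop] at h
        obtain ⟨N₀, hN₀⟩ := h ε' hε'pos
        filter_upwards [eventually_ge_atTop N₀] with M hM
        have := hN₀ M hM
        rwa [Real.dist_eq] at this
      have hgood : ∀ᶠ M : ℕ in atTop,
          |A ⌊g ^ M⌋₊ - l| < ε' ∧ |A ⌊g ^ (M + 1)⌋₊ - l| < ε' ∧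
          W ⌊g ^ (M + 1)⌋₊ / W ⌊g ^ M⌋₊ < 1 + ε' := by
        have hshift : ∀ᶠ M : ℕ in atTop, |A ⌊g ^ (M + 1)⌋₊ - l| < ε' :=
          (tendsto_add_atTop_nat 1).eventually hAclose
        filter_upwards [hAclose, hshift, hk] with M h1 h2 h3
        exact ⟨h1, h2, h3⟩
      obtain ⟨M₀, hM₀⟩ := eventually_atTop.mp hgood
      filter_upwards [bracket g hg M₀] with N hN
      obtain ⟨M, hMge, hQN, hNP⟩ := hN
      set Q := ⌊g ^ M⌋₊ with hQdef
      set P := ⌊g ^ (M + 1)⌋₊ with hPdef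
      obtain ⟨hAQ, hAP, hρ⟩ := hM₀ M hMge
      have hWQ := hWpos Q
      have hWP := hWpos P
      obtain ⟨hup, hlo⟩ := sandwich P Q N hQN hNP
      have hρ1 : 1 ≤ W P / W Q :=
        (one_le_div hWQ).mpr (hWmono' (le_trans hQN hNP))
      have hAPlt : A P < l + ε' := by
        have := abs_lt.mp hAP; linarith [this.2]
      have hAQgt : l - ε' < A Q := by
        have := abs_lt.mp hAQ; linarith [this.1]
      rw [Real.dist_eq, abs_lt]
      constructor
      · -- l - ε < A N
        by_cases hcase : l ≤ ε'
        · have := hAnn N; linarith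
        · push_neg at hcase
          have hmul : A Q * W Q ≤ A N * W P := by
            have h1 : A Q * (W Q / W P) * W P = A Q * W Q := by
              rw [mul_assoc, div_mul_cancel₀ _ hWP.ne']
            calc A Q * W Q = A Q * (W Q / W P) * W P := h1.symm
              _ ≤ A N * W P := mul_le_mul_of_nonneg_right hlo hWP.le
          have hρ' : W P < (1 + ε') * W Q := by
            rw [div_lt_iff₀ hWQ] at hρ; linarith
          have t1 : (l - ε') * W Q < A Q * W Q :=
            mul_lt_mul_of_pos_right hAQgt hWQ
          have t2 : A N * W P ≤ A N * ((1 + ε') * W Q) :=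
            mul_le_mul_of_nonneg_left hρ'.le (hAnn N)
          have t3 : (l - ε') * W Q < A N * ((1 + ε') * W Q) := by linarith
          have t4 : l - ε' < A N * (1 + ε') := by
            have := (mul_lt_mul_iff_of_pos_right hWQ).mp (by linarith [t3] :
              (l - ε') * W Q < (A N * (1 + ε')) * W Q)
            exact this
          nlinarith [hAnn N, hε'le, hε'le1, hε'pos, hε, hl]
      · -- A N - l < ε
        have hABound : A N ≤ (l + ε') * (1 + ε') := by
          calc A N ≤ A P * (W P / W Q) := hup
            _ ≤ (l + ε') * (1 + ε') :=
                mul_le_mul hAPlt.le hρ.le (le_trans zero_le_one hρ1) (by linarith)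
        nlinarith [hε'le, hε'le1, hε'pos, hε]
    exact eventually_atTop.mp key
  | top =>
    rw [EReal.tendsto_nhds_top_iff_real]
    intro C
    obtain ⟨k, hk⟩ := ratio 1 one_pos
    set g := γ k with hgdef
    have hg : 1 < g := hγ k
    set c := max C 0 with hcdef
    have hCc : C ≤ c := le_max_left _ _
    have hc0 : 0 ≤ c := le_max_right _ _
    have h1 : ∀ᶠ M : ℕ in atTop, 2 * c + 2 < A ⌊g ^ M⌋₊ := by
      have h := EReal.tendsto_nhds_top_iff_real.mp (hsub k) (2 * c + 2)
      filter_upwards [h] with M hM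
      exact_mod_cast hM
    have hgood : ∀ᶠ M : ℕ in atTop,
        2 * c + 2 < A ⌊g ^ M⌋₊ ∧ W ⌊g ^ (M + 1)⌋₊ / W ⌊g ^ M⌋₊ < 1 + 1 := by
      filter_upwards [h1, hk] with M hx hy
      exact ⟨hx, hy⟩
    obtain ⟨M₀, hM₀⟩ := eventually_atTop.mp hgood
    filter_upwards [bracket g hg M₀] with N hN
    obtain ⟨M, hMge, hQN, hNP⟩ := hN
    set Q := ⌊g ^ M⌋₊ with hQdef
    set P := ⌊g ^ (M + 1)⌋₊ with hPdef
    obtain ⟨hAQ, hρ⟩ := hM₀ M hMge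
    have hWQ := hWpos Q
    have hWP := hWpos P
    have hlo := (sandwich P Q N hQN hNP).2
    have hmul : A Q * W Q ≤ A N * W P := by
      have h1 : A Q * (W Q / W P) * W P = A Q * W Q := by
        rw [mul_assoc, div_mul_cancel₀ _ hWP.ne']
      calc A Q * W Q = A Q * (W Q / W P) * W P := h1.symm
        _ ≤ A N * W P := mul_le_mul_of_nonneg_right hlo hWP.le
    have hρ' : W P < 2 * W Q := by
      rw [div_lt_iff₀ hWQ] at hρ; linarith
    have s1 : (2 * c + 2) * W Q < A Q * W Q := mul_lt_mul_of_pos_right hAQ hWQ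
    have s2 : A N * W P ≤ A N * (2 * W Q) := mul_le_mul_of_nonneg_left hρ'.le (hAnn N)
    have s4 : 2 * c + 2 < A N * 2 := by
      have h5 : (2 * c + 2) * W Q < A N * 2 * W Q := by linarith [s1, s2, hmul]
      exact (mul_lt_mul_iff_of_pos_right hWQ).mp h5
    have : C < A N := by linarith
    exact_mod_cast this
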